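/- Let L_d : ℝ^n × ℝ^n → ℝ be a C² discrete Lagrangian, U ⊆ ℝ^n × ℝ^n an open set, and σ : U → ℝ^n a C¹ map satisfying −D_1 L_d(q, σ(q,p)) = p for all (q,p) ∈ U (i.e. σ provides a local inverse of the discrete Legendre transform 𝔽⁻L_d). Define the discrete Hamiltonian map Φ : U → ℝ^n × ℝ^n by Φ(q,p) = (σ(q,p), D_2 L_d(q, σ(q,p))). Then Φ is symplectic: at every (q,p) ∈ U and for all u, v ∈ ℝ^n × ℝ^n, Ω(DΦ(q,p)[u], DΦ(q,p)[v]) = Ω(u,v), where Ω is the canonical symplectic form Ω((a,b),(c,d)) = ⟨b,c⟩ − ⟨a,d⟩ on ℝ^n × ℝ^n ≅ T*ℝ^n. -/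

import Mathlib

open scoped RealInnerProductSpace

/-- Gradient of a discrete Lagrangian with respect to its first argument. -/
noncomputable def grad1 {n : ℕ}
    (Ld : EuclideanSpace ℝ (Fin n) × EuclideanSpace ℝ (Fin n) → ℝ)
    (a b : EuclideanSpace ℝ (Fin n)) : EuclideanSpace ℝ (Fin n) :=
  gradient (fun x => Ld (x, b)) a

/-- Gradient of a discrete Lagrangian with respect to its second argument. -/
noncomputable def grad2 {n : ℕ}
    (Ld : EuclideanSpace ℝ (Fin n) × EuclideanSpace ℝ (Fin n) → ℝ)
    (a b : EuclideanSpace ℝ (Fin n)) : EuclideanSpace ℝ (Fin n) :=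
  gradient (fun y => Ld (a, y)) b

/-- The canonical symplectic bilinear form on `ℝⁿ × ℝⁿ ≅ T*ℝⁿ`:
`Ω((a,b),(c,d)) = ⟨b,c⟩ − ⟨a,d⟩`. -/
noncomputable def Omega {n : ℕ}
    (u v : EuclideanSpace ℝ (Fin n) × EuclideanSpace ℝ (Fin n)) : ℝ :=
  ⟪u.2, v.1⟫ - ⟪u.1, v.2⟫

namespace Stmt4Aux

open ContinuousLinearMap InnerProductSpace

local notation "E" n => EuclideanSpace ℝ (Fin n)

noncomputable def K (n : ℕ) :
    (((E n) × (E n)) →L[ℝ] ℝ) →L[ℝ] ((E n) × (E n)) :=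
  (((toDual ℝ (E n)).symm.toContinuousLinearEquiv).toContinuousLinearMap.comp
    ((compL ℝ (E n) ((E n) × (E n)) ℝ).flip (inl ℝ _ _))).prod
  (((toDual ℝ (E n)).symm.toContinuousLinearEquiv).toContinuousLinearMap.comp
    ((compL ℝ (E n) ((E n) × (E n)) ℝ).flip (inr ℝ _ _)))

lemma K_fst {n : ℕ} (φ : ((E n) × (E n)) →L[ℝ] ℝ) :
    (K n φ).1 = (toDual ℝ (E n)).symm (φ.comp (inl ℝ _ _)) := rfl

lemma K_snd {n : ℕ} (φ : ((E n) × (E n)) →L[ℝ] ℝ) :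
    (K n φ).2 = (toDual ℝ (E n)).symm (φ.comp (inr ℝ _ _)) := rfl

lemma K_pair {n : ℕ} (φ : ((E n) × (E n)) →L[ℝ] ℝ) (y : (E n) × (E n)) :
    ⟪(K n φ).1, y.1⟫ + ⟪(K n φ).2, y.2⟫ = φ y := by
  rw [K_fst, K_snd, toDual_symm_apply, toDual_symm_apply]
  rw [comp_apply, comp_apply, inl_apply, inr_apply, ← map_add]
  congr 1
  exact Prod.ext (by simp) (by simp)

lemma grad1_eq {n : ℕ} (Ld : (E n) × (E n) → ℝ) (h : Differentiable ℝ Ld) (a b : E n) :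
    grad1 Ld a b = (K n (fderiv ℝ Ld (a, b))).1 := by
  have hf : HasFDerivAt (fun x : E n => Ld (x, b))
      ((fderiv ℝ Ld (a, b)).comp (inl ℝ (E n) (E n))) a :=
    (h (a, b)).hasFDerivAt.comp a (hasFDerivAt_prodMk_left a b)
  rw [grad1, gradient, hf.fderiv, K_fst]

lemma grad2_eq {n : ℕ} (Ld : (E n) × (E n) → ℝ) (h : Differentiable ℝ Ld) (a b : E n) :
    grad2 Ld a b = (K n (fderiv ℝ Ld (a, b))).2 := by
  have hf : HasFDerivAt (fun y : E n => Ld (a, y))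
      ((fderiv ℝ Ld (a, b)).comp (inr ℝ (E n) (E n))) b :=
    (h (a, b)).hasFDerivAt.comp b (hasFDerivAt_prodMk_right a b)
  rw [grad2, gradient, hf.fderiv, K_snd]

end Stmt4Aux
open Stmt4Aux in

theorem stmt_4_aux {n : ℕ}
    (Ld : EuclideanSpace ℝ (Fin n) × EuclideanSpace ℝ (Fin n) → ℝ)
    (hLd : ContDiff ℝ 2 Ld)
    (U : Set (EuclideanSpace ℝ (Fin n) × EuclideanSpace ℝ (Fin n)))
    (hU : IsOpen U)
    (σ : EuclideanSpace ℝ (Fin n) × EuclideanSpace ℝ (Fin n) → EuclideanSpace ℝ (Fin n))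
    (hσ : ContDiffOn ℝ 1 σ U)
    (hinv : ∀ qp ∈ U, -grad1 Ld qp.1 (σ qp) = qp.2) :
    ∀ qp ∈ U, ∀ u v : EuclideanSpace ℝ (Fin n) × EuclideanSpace ℝ (Fin n),
      (⟪(fderiv ℝ (fun z => (σ z, grad2 Ld z.1 (σ z))) qp u).2,
        (fderiv ℝ (fun z => (σ z, grad2 Ld z.1 (σ z))) qp v).1⟫ -
       ⟪(fderiv ℝ (fun z => (σ z, grad2 Ld z.1 (σ z))) qp u).1,
        (fderiv ℝ (fun z => (σ z, grad2 Ld z.1 (σ z))) qp v).2⟫ : ℝ)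
        = ⟪u.2, v.1⟫ - ⟪u.1, v.2⟫ := by
  intro qp hqp u v
  have hLdd : Differentiable ℝ Ld := hLd.differentiable (by norm_num)
  have hf' : ContDiff ℝ 1 (fderiv ℝ Ld) := hLd.fderiv_right (by norm_num)
  set w : EuclideanSpace ℝ (Fin n) × EuclideanSpace ℝ (Fin n) := (qp.1, σ qp) with hw
  set H := fderiv ℝ (fderiv ℝ Ld) w with hHdef
  have hsymm : ∀ x y, H x y = H y x := fun x y =>
    hLd.contDiffAt.isSymmSndFDerivAt (by norm_num) x y
  have hσd : DifferentiableAt ℝ σ qp :=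
    ((hσ.contDiffAt (hU.mem_nhds hqp)).differentiableAt one_ne_zero)
  set A := fderiv ℝ σ qp with hA
  have hψ : HasFDerivAt (fun z : EuclideanSpace ℝ (Fin n) × EuclideanSpace ℝ (Fin n) =>
      (z.1, σ z)) ((ContinuousLinearMap.fst ℝ _ _).prod A) qp :=
    HasFDerivAt.prodMk (hasFDerivAt_fst) hσd.hasFDerivAt
  set Dψ := (ContinuousLinearMap.fst ℝ (EuclideanSpace ℝ (Fin n)) (EuclideanSpace ℝ (Fin n))).prod A
    with hDψ
  -- derivative of the gradient pair
  have hG : HasFDerivAt (fun z : EuclideanSpace ℝ (Fin n) × EuclideanSpace ℝ (Fin n) =>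
      (grad1 Ld z.1 z.2, grad2 Ld z.1 z.2)) ((K n).comp H) w := by
    have h1 : HasFDerivAt (fun z => K n (fderiv ℝ Ld z)) ((K n).comp H) w :=
      (K n).hasFDerivAt.comp w ((hf'.differentiable one_ne_zero w).hasFDerivAt)
    have hfun : (fun z : EuclideanSpace ℝ (Fin n) × EuclideanSpace ℝ (Fin n) =>
        (grad1 Ld z.1 z.2, grad2 Ld z.1 z.2)) = fun z => K n (fderiv ℝ Ld z) :=
      funext fun z => Prod.ext (grad1_eq Ld hLdd z.1 z.2) (grad2_eq Ld hLdd z.1 z.2)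
    rw [hfun]
    exact h1
  set B := ((K n).comp H).comp Dψ with hB
  have hgψ : HasFDerivAt (fun z : EuclideanSpace ℝ (Fin n) × EuclideanSpace ℝ (Fin n) =>
      (grad1 Ld z.1 (σ z), grad2 Ld z.1 (σ z))) B qp := hG.comp qp hψ
  have hΦ : HasFDerivAt (fun z : EuclideanSpace ℝ (Fin n) × EuclideanSpace ℝ (Fin n) =>
      (σ z, grad2 Ld z.1 (σ z)))
      (A.prod ((ContinuousLinearMap.snd ℝ _ _).comp B)) qp :=
    HasFDerivAt.prodMk hσd.hasFDerivAt hgψ.snd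
  rw [hΦ.fderiv]
  -- the constraint gives the first component of B
  have hB1 : ∀ x, (B x).1 = -x.2 := by
    have h1 := hgψ.fst
    have h2 : HasFDerivAt (fun z : EuclideanSpace ℝ (Fin n) × EuclideanSpace ℝ (Fin n) =>
        -z.2) (-(ContinuousLinearMap.snd ℝ _ _)) qp := HasFDerivAt.neg (hasFDerivAt_snd)
    have heq : (fun z : EuclideanSpace ℝ (Fin n) × EuclideanSpace ℝ (Fin n) =>
        grad1 Ld z.1 (σ z)) =ᶠ[nhds qp] fun z => -z.2 := by
      filter_upwards [hU.mem_nhds hqp] with z hz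
      have h := hinv z hz
      rw [← h, neg_neg]
    have huniq : (ContinuousLinearMap.fst ℝ _ _).comp B
        = -(ContinuousLinearMap.snd ℝ _ _) :=
      h1.unique (h2.congr_of_eventuallyEq heq)
    intro x
    have := ContinuousLinearMap.ext_iff.mp huniq x
    simpa using this
  -- the key symmetry identity
  have key : ∀ x y : EuclideanSpace ℝ (Fin n) × EuclideanSpace ℝ (Fin n),
      ⟪(B x).1, y.1⟫ + ⟪(B x).2, A y⟫ = ⟪(B y).1, x.1⟫ + ⟪(B y).2, A x⟫ := by
    intro x y
    have hBx : B x = K n (H (Dψ x)) := rfl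
    have hBy : B y = K n (H (Dψ y)) := rfl
    have hDψ1 : ∀ z, (Dψ z).1 = z.1 := fun z => rfl
    have hDψ2 : ∀ z, (Dψ z).2 = A z := fun z => rfl
    have e1 : ⟪(B x).1, y.1⟫ + ⟪(B x).2, A y⟫ = (H (Dψ x)) (Dψ y) := by
      rw [hBx, ← hDψ1 y, ← hDψ2 y, K_pair]
    have e2 : ⟪(B y).1, x.1⟫ + ⟪(B y).2, A x⟫ = (H (Dψ y)) (Dψ x) := by
      rw [hBy, ← hDψ1 x, ← hDψ2 x, K_pair]
    rw [e1, e2, hsymm]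
  have keyuv := key u v
  rw [hB1 u, hB1 v] at keyuv
  simp only [ContinuousLinearMap.prod_apply, ContinuousLinearMap.comp_apply,
    ContinuousLinearMap.coe_snd']
  have c1 : ⟪A u, (B v).2⟫ = ⟪(B v).2, A u⟫ := real_inner_comm _ _
  have c2 : ⟪u.1, v.2⟫ = ⟪v.2, u.1⟫ := real_inner_comm _ _
  rw [inner_neg_left, inner_neg_left] at keyuv

  linarith [keyuv]

/-- If `σ` is a C¹ local inverse of the discrete Legendre transform `𝔽⁻L_d`
(i.e. `−D₁L_d(q, σ(q,p)) = p` on the open set `U`), then the discrete Hamiltonian map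
`Φ(q,p) = (σ(q,p), D₂L_d(q, σ(q,p)))` is symplectic on `U`. -/
theorem stmt_4 {n : ℕ}
    (Ld : EuclideanSpace ℝ (Fin n) × EuclideanSpace ℝ (Fin n) → ℝ)
    (hLd : ContDiff ℝ 2 Ld)
    (U : Set (EuclideanSpace ℝ (Fin n) × EuclideanSpace ℝ (Fin n)))
    (hU : IsOpen U)
    (σ : EuclideanSpace ℝ (Fin n) × EuclideanSpace ℝ (Fin n) → EuclideanSpace ℝ (Fin n))
    (hσ : ContDiffOn ℝ 1 σ U)
    (hinv : ∀ qp ∈ U, -grad1 Ld qp.1 (σ qp) = qp.2) :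
    ∀ qp ∈ U, ∀ u v : EuclideanSpace ℝ (Fin n) × EuclideanSpace ℝ (Fin n),
      Omega (fderiv ℝ (fun z => (σ z, grad2 Ld z.1 (σ z))) qp u)
          (fderiv ℝ (fun z => (σ z, grad2 Ld z.1 (σ z))) qp v)
        = Omega u v := by
  intro qp hqp u v
  simp only [Omega]
  exact stmt_4_aux Ld hLd U hU σ hσ hinv qp hqp u v
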